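/- Fix δ ≥ 0. If the reachability intervals R_i[j] and R'_j[i] are both empty, then R_{i+1}[j] and R'_{j+1}[i] are both empty. Formally: if no point y ∈ w_j w_{j+1} satisfies d_F(τ[v_1,v_i], σ[w_1,y]) ≤ δ and no point x ∈ v_i v_{i+1} satisfies d_F(τ[v_1,x], σ[w_1,w_j]) ≤ δ, then no point y ∈ w_j w_{j+1} satisfies d_F(τ[v_1,v_{i+1}], σ[w_1,y]) ≤ δ and no point x ∈ v_i v_{i+1} satisfies d_F(τ[v_1,x], σ[w_1,w_{j+1}]) ≤ δ. -/

import Mathlib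

open scoped RealInnerProductSpace

/-- Piecewise-linear (polygonal) curve with `n` edges and vertices `v 0, ..., v n`,
parameterized on `[0,1]`. -/
noncomputable def polyline {E : Type*} [NormedAddCommGroup E] [NormedSpace ℝ E]
    (n : ℕ) (v : ℕ → E) (s : ℝ) : E :=
  let u : ℝ := s * n
  let i : ℕ := min (n - 1) (⌊u⌋.toNat)
  (1 - (u - i)) • v i + (u - i) • v (i + 1)

/-- A reparameterization of `[0,1]`: continuous, monotone, fixing the endpoints. -/
def IsReparam (φ : ℝ → ℝ) : Prop :=
  Continuous φ ∧ Monotone φ ∧ φ 0 = 0 ∧ φ 1 = 1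

/-- The Fréchet distance between two curves `f g : ℝ → E` (regarded as parameterized
on `[0,1]`): the infimum of the bounds `δ` achieved by some pair of matched
reparameterizations. -/
noncomputable def frechetDist {E : Type*} [NormedAddCommGroup E] [NormedSpace ℝ E]
    (f g : ℝ → E) : ℝ :=
  sInf {δ : ℝ | 0 ≤ δ ∧ ∃ φ ψ : ℝ → ℝ, IsReparam φ ∧ IsReparam ψ ∧
    ∀ t ∈ Set.Icc (0:ℝ) 1, dist (f (φ t)) (g (ψ t)) ≤ δ}

/-- Vertices of the subcurve `τ[v 0, x]` where `x` lies on the edge from `v i` to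
`v (i+1)`: the vertices `v 0, ..., v i` followed by `x`. -/
def subVert {E : Type*} (v : ℕ → E) (i : ℕ) (x : E) : ℕ → E :=
  fun k => if k ≤ i then v k else x

section Poly
variable {E : Type*} [NormedAddCommGroup E] [NormedSpace ℝ E]

lemma polyline_def (n : ℕ) (v : ℕ → E) (s : ℝ) :
    polyline n v s = (1 - (s*n - (min (n-1) (⌊s*(n:ℝ)⌋.toNat) : ℕ))) • v (min (n-1) (⌊s*(n:ℝ)⌋.toNat)) +
      (s*n - (min (n-1) (⌊s*(n:ℝ)⌋.toNat) : ℕ)) • v (min (n-1) (⌊s*(n:ℝ)⌋.toNat) + 1) := rfl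

lemma poly_zero (v : ℕ → E) (s : ℝ) : polyline 0 v s = v 0 := by
  rw [polyline_def]
  norm_num

lemma poly_eval (n k : ℕ) (v : ℕ → E) (t : ℝ) (hk : k + 1 ≤ n) (ht0 : 0 ≤ t) (ht1 : t ≤ 1) :
    polyline n v (((k : ℝ) + t) / n) = (1 - t) • v k + t • v (k + 1) := by
  have hn : (0:ℝ) < n := by
    have : 1 ≤ n := by omega
    exact_mod_cast Nat.pos_of_ne_zero (by omega)
  have hu : ((k : ℝ) + t) / n * n = (k : ℝ) + t := div_mul_cancel₀ _ (ne_of_gt hn)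
  rw [polyline_def, hu]
  rcases lt_or_eq_of_le ht1 with ht | ht
  · have hfl : ⌊(k:ℝ) + t⌋ = (k:ℤ) := by
      rw [Int.floor_eq_iff]
      push_cast
      constructor <;> linarith
    have : min (n-1) (⌊(k:ℝ) + t⌋.toNat) = k := by
      rw [hfl]
      simp only [Int.toNat_natCast]
      omega
    rw [this]
    have : (k:ℝ) + t - (k:ℕ) = t := by ring
    rw [this]
  · subst ht
    have hfl : ⌊(k:ℝ) + 1⌋ = (k:ℤ) + 1 := by
      rw [Int.floor_eq_iff]
      push_cast
      constructor <;> linarith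
    rw [hfl]
    have htn : ((k:ℤ)+1).toNat = k + 1 := by omega
    rw [htn]
    by_cases hle : k + 2 ≤ n
    · have : min (n-1) (k+1) = k+1 := by omega
      rw [this]
      push_cast
      norm_num
    · have hkn : k + 1 = n := by omega
      have : min (n-1) (k+1) = k := by omega
      rw [this]
      push_cast
      norm_num

lemma exists_decomp (n : ℕ) (hn : 1 ≤ n) (s : ℝ) (hs0 : 0 ≤ s) (hs1 : s ≤ 1) :
    ∃ k t, k + 1 ≤ n ∧ 0 ≤ t ∧ t ≤ 1 ∧ s = ((k:ℝ) + t) / n := by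
  have hn' : (0:ℝ) < n := by exact_mod_cast Nat.pos_of_ne_zero (by omega)
  set u := s * n with hudef
  have hu0 : 0 ≤ u := by positivity
  have hun : u ≤ n := by
    calc u = s * n := rfl
    _ ≤ 1 * n := by apply mul_le_mul_of_nonneg_right hs1 hn'.le
    _ = n := by ring
  have hfl0 : 0 ≤ ⌊u⌋ := Int.floor_nonneg.2 hu0
  have hs' : s = u / n := by field_simp [hudef]; exact hudef.symm
  by_cases h : ⌊u⌋.toNat ≤ n - 1
  · refine ⟨⌊u⌋.toNat, u - ⌊u⌋.toNat, by omega, ?_, ?_, ?_⟩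
    · have : ((⌊u⌋.toNat : ℤ) : ℝ) ≤ u := by
        rw [Int.toNat_of_nonneg hfl0]; exact Int.floor_le u
      push_cast at this ⊢
      linarith
    · have h1 : u < ⌊u⌋ + 1 := Int.lt_floor_add_one u
      have : ((⌊u⌋.toNat : ℤ) : ℝ) = (⌊u⌋ : ℝ) := by rw [Int.toNat_of_nonneg hfl0]
      push_cast at this ⊢
      linarith
    · rw [hs']; ring_nf
  · have h2 : (n:ℝ) ≤ ⌊u⌋ := by
      have : (n:ℤ) ≤ ⌊u⌋ := by omega
      exact_mod_cast this
    have h3 : (n:ℝ) ≤ u := le_trans h2 (Int.floor_le u)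
    have hc : ((n - 1 : ℕ) : ℝ) = (n:ℝ) - 1 := by
      push_cast [Nat.cast_sub hn]; ring
    refine ⟨n-1, u - ((n-1:ℕ):ℝ), by omega, ?_, ?_, ?_⟩
    · rw [hc]; linarith
    · rw [hc]; linarith
    · rw [hs']; ring_nf

lemma poly_prefix (n : ℕ) (v : ℕ → E) (s : ℝ) (h0 : 0 ≤ s) (h1 : s ≤ 1) :
    polyline n v s = polyline (n+1) v (s * ((n:ℝ) / ((n:ℝ)+1))) := by
  rcases Nat.eq_zero_or_pos n with h | h
  · subst h
    rw [poly_zero]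
    norm_num
    have : polyline 1 v 0 = v 0 := by
      have := poly_eval 1 0 v 0 (by omega) le_rfl zero_le_one
      norm_num at this
      exact this
    rw [this]
  · obtain ⟨k, t, hk, ht0, ht1, hs⟩ := exists_decomp n h s h0 h1
    subst hs
    rw [poly_eval n k v t hk ht0 ht1]
    have harg : ((k:ℝ) + t) / n * ((n:ℝ) / ((n:ℝ)+1)) = ((k:ℝ) + t) / ((n:ℕ)+1 : ℕ) := by
      have hn' : (0:ℝ) < n := by exact_mod_cast h
      push_cast
      field_simp
    rw [harg, poly_eval (n+1) k v t (by omega) ht0 ht1]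

lemma poly_congr (n : ℕ) (v v' : ℕ → E) (h : ∀ k, k ≤ n → v k = v' k) (s : ℝ)
    (hs0 : 0 ≤ s) (hs1 : s ≤ 1) : polyline n v s = polyline n v' s := by
  rcases Nat.eq_zero_or_pos n with hn | hn
  · subst hn; rw [poly_zero, poly_zero, h 0 le_rfl]
  · obtain ⟨k, t, hk, ht0, ht1, hs⟩ := exists_decomp n hn s hs0 hs1
    subst hs
    rw [poly_eval n k v t hk ht0 ht1, poly_eval n k v' t hk ht0 ht1,
      h k (by omega), h (k+1) (by omega)]

end Poly

section Poly2
variable {E : Type*} [NormedAddCommGroup E] [NormedSpace ℝ E]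

lemma subVert_subVert (w : ℕ → E) (n : ℕ) (y y' : E) :
    subVert (subVert w n y) n y' = subVert w n y' := by
  funext k
  unfold subVert
  by_cases h : k ≤ n <;> simp [h]

lemma poly_edge (n : ℕ) (v : ℕ → E) (y y' : E) (lam : ℝ) (hl0 : 0 ≤ lam) (hl1 : lam ≤ 1)
    (hy' : y' = (1 - lam) • v n + lam • y) (p : ℝ) (hp0 : 0 ≤ p) (hp1 : p ≤ 1) :
    polyline (n+1) (subVert v n y') p
      = polyline (n+1) (subVert v n y)
          (min p ((n:ℝ)/((n:ℝ)+1)) + lam * max (p - (n:ℝ)/((n:ℝ)+1)) 0) := by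
  have hn1 : (0:ℝ) < (n:ℝ) + 1 := by positivity
  obtain ⟨k, t, hk, ht0, ht1, hp⟩ := exists_decomp (n+1) (by omega) p hp0 hp1
  subst hp
  have hcast : ((n+1 : ℕ) : ℝ) = (n:ℝ) + 1 := by push_cast; ring
  by_cases hkn : k < n
  · -- p ≤ a, the map is the identity
    have hple : ((k:ℝ) + t) / ((n+1:ℕ):ℝ) ≤ (n:ℝ)/((n:ℝ)+1) := by
      rw [hcast, div_le_div_iff₀ hn1 hn1]
      have : (k:ℝ) + 1 ≤ (n:ℝ) := by exact_mod_cast hkn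
      nlinarith
    have harg : min (((k:ℝ) + t) / ((n+1:ℕ):ℝ)) ((n:ℝ)/((n:ℝ)+1))
        + lam * max (((k:ℝ) + t) / ((n+1:ℕ):ℝ) - (n:ℝ)/((n:ℝ)+1)) 0
        = ((k:ℝ) + t) / ((n+1:ℕ):ℝ) := by
      rw [min_eq_left hple, max_eq_right (by linarith)]
      ring
    rw [harg, poly_eval (n+1) k _ t hk ht0 ht1, poly_eval (n+1) k _ t hk ht0 ht1]
    have e1 : subVert v n y' k = subVert v n y k := by
      unfold subVert; simp [Nat.le_of_lt hkn]
    have e2 : subVert v n y' (k+1) = subVert v n y (k+1) := by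
      unfold subVert; simp [Nat.succ_le_of_lt hkn]
    rw [e1, e2]
  · have hkn' : k = n := by omega
    subst hkn'
    have hpa : ((k:ℝ) + t) / ((k+1:ℕ):ℝ) - (k:ℝ)/((k:ℝ)+1) = t / ((k:ℝ)+1) := by
      rw [hcast]; field_simp; ring
    have harg : min (((k:ℝ) + t) / ((k+1:ℕ):ℝ)) ((k:ℝ)/((k:ℝ)+1))
        + lam * max (((k:ℝ) + t) / ((k+1:ℕ):ℝ) - (k:ℝ)/((k:ℝ)+1)) 0
        = ((k:ℝ) + lam * t) / ((k+1:ℕ):ℝ) := by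
      have hge : (k:ℝ)/((k:ℝ)+1) ≤ ((k:ℝ)+t)/((k+1:ℕ):ℝ) := by
        have h0 : (0:ℝ) ≤ t/((k:ℝ)+1) := by positivity
        linarith [hpa]
      rw [max_eq_left (by rw [hpa]; positivity), min_eq_right hge, hpa]
      rw [hcast]
      field_simp
    rw [harg, poly_eval (k+1) k _ t hk ht0 ht1,
      poly_eval (k+1) k _ (lam * t) hk (by positivity) (by nlinarith)]
    have e1 : subVert v k y' k = v k := by unfold subVert; simp
    have e2 : subVert v k y k = v k := by unfold subVert; simp
    have e3 : subVert v k y' (k+1) = y' := by unfold subVert; simp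
    have e4 : subVert v k y (k+1) = y := by unfold subVert; simp
    rw [e1, e2, e3, e4, hy']
    module

lemma poly_bound (n : ℕ) (v : ℕ → E) :
    ∃ C, ∀ s ∈ Set.Icc (0:ℝ) 1, ‖polyline n v s‖ ≤ C := by
  refine ⟨∑ k ∈ Finset.range (n+2), ‖v k‖, fun s hs => ?_⟩
  have hvk : ∀ k, k ≤ n+1 → ‖v k‖ ≤ ∑ k ∈ Finset.range (n+2), ‖v k‖ := fun k hk =>
    Finset.single_le_sum (f := fun k => ‖v k‖) (fun _ _ => norm_nonneg _)
      (Finset.mem_range.2 (by omega))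
  rcases Nat.eq_zero_or_pos n with h | h
  · subst h; rw [poly_zero]; exact hvk 0 (by omega)
  · obtain ⟨k, t, hk, ht0, ht1, hs'⟩ := exists_decomp n h s hs.1 hs.2
    rw [hs', poly_eval n k v t hk ht0 ht1]
    calc ‖(1-t) • v k + t • v (k+1)‖ ≤ ‖(1-t) • v k‖ + ‖t • v (k+1)‖ := norm_add_le _ _
      _ = (1-t) * ‖v k‖ + t * ‖v (k+1)‖ := by
          rw [norm_smul, norm_smul, Real.norm_of_nonneg (by linarith), Real.norm_of_nonneg ht0]
      _ ≤ (1-t) * (∑ k ∈ Finset.range (n+2), ‖v k‖) + t * (∑ k ∈ Finset.range (n+2), ‖v k‖) := by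
          have h1 := hvk k (by omega)
          have h2 := hvk (k+1) (by omega)
          have : (0:ℝ) ≤ 1 - t := by linarith
          nlinarith
      _ = ∑ k ∈ Finset.range (n+2), ‖v k‖ := by ring

lemma subvert_dist (n : ℕ) (w : ℕ → E) (y y' : E) (s : ℝ) (hs0 : 0 ≤ s) (hs1 : s ≤ 1) :
    dist (polyline (n+1) (subVert w n y) s) (polyline (n+1) (subVert w n y') s) ≤ dist y y' := by
  obtain ⟨k, t, hk, ht0, ht1, hs⟩ := exists_decomp (n+1) (by omega) s hs0 hs1
  subst hs
  rw [poly_eval (n+1) k _ t hk ht0 ht1, poly_eval (n+1) k _ t hk ht0 ht1]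
  by_cases hkn : k < n
  · have e1 : subVert w n y k = subVert w n y' k := by unfold subVert; simp [Nat.le_of_lt hkn]
    have e2 : subVert w n y (k+1) = subVert w n y' (k+1) := by
      unfold subVert; simp [Nat.succ_le_of_lt hkn]
    rw [e1, e2]
    simp [dist_nonneg]
  · have hkn' : k = n := by omega
    subst hkn'
    have e1 : subVert w k y k = w k := by unfold subVert; simp
    have e2 : subVert w k y' k = w k := by unfold subVert; simp
    have e3 : subVert w k y (k+1) = y := by unfold subVert; simp
    have e4 : subVert w k y' (k+1) = y' := by unfold subVert; simp
    rw [e1, e2, e3, e4, dist_add_left, dist_smul₀]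
    calc ‖t‖ * dist y y' ≤ 1 * dist y y' := by
          apply mul_le_mul_of_nonneg_right _ dist_nonneg
          rw [Real.norm_of_nonneg ht0]; exact ht1
      _ = dist y y' := one_mul _

end Poly2

section Frechet
variable {E : Type*} [NormedAddCommGroup E] [NormedSpace ℝ E]

def frechetSet (f g : ℝ → E) : Set ℝ :=
  {δ : ℝ | 0 ≤ δ ∧ ∃ φ ψ : ℝ → ℝ, IsReparam φ ∧ IsReparam ψ ∧
    ∀ t ∈ Set.Icc (0:ℝ) 1, dist (f (φ t)) (g (ψ t)) ≤ δ}

lemma frechetDist_eq (f g : ℝ → E) : frechetDist f g = sInf (frechetSet f g) := rfl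

lemma frechetSet_bddBelow (f g : ℝ → E) : BddBelow (frechetSet f g) :=
  ⟨0, fun _ hx => hx.1⟩

lemma frechetDist_le (f g : ℝ → E) (c : ℝ) (h : c ∈ frechetSet f g) : frechetDist f g ≤ c :=
  csInf_le (frechetSet_bddBelow f g) h

lemma reparam_id : IsReparam (id : ℝ → ℝ) := ⟨continuous_id, monotone_id, rfl, rfl⟩

lemma reparam_mem {φ : ℝ → ℝ} (h : IsReparam φ) {t : ℝ} (ht : t ∈ Set.Icc (0:ℝ) 1) :
    φ t ∈ Set.Icc (0:ℝ) 1 := by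
  obtain ⟨_, hm, h0, h1⟩ := h
  exact ⟨h0 ▸ hm ht.1, h1 ▸ hm ht.2⟩

lemma frechetSet_nonempty (n m : ℕ) (v w : ℕ → E) :
    (frechetSet (polyline n v) (polyline m w)).Nonempty := by
  obtain ⟨C1, hC1⟩ := poly_bound n v
  obtain ⟨C2, hC2⟩ := poly_bound m w
  refine ⟨max (C1 + C2) 0, le_max_right _ _, id, id, reparam_id, reparam_id, fun t ht => ?_⟩
  calc dist (polyline n v (id t)) (polyline m w (id t))
      ≤ ‖polyline n v t‖ + ‖polyline m w t‖ := by rw [dist_eq_norm]; exact norm_sub_le _ _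
    _ ≤ C1 + C2 := add_le_add (hC1 t ht) (hC2 t ht)
    _ ≤ max (C1 + C2) 0 := le_max_left _ _

lemma exists_matching_lt (f g : ℝ → E) (δ ε : ℝ) (hne : (frechetSet f g).Nonempty)
    (h : frechetDist f g ≤ δ) (hε : 0 < ε) : ∃ c ∈ frechetSet f g, c < δ + ε :=
  exists_lt_of_csInf_lt hne (by rw [frechetDist_eq] at h; linarith)

lemma reparam_ivt {φ : ℝ → ℝ} (h : IsReparam φ) (T₀ : ℝ) (hT₀ : T₀ ∈ Set.Icc (0:ℝ) 1)
    (b : ℝ) (hb1 : φ T₀ ≤ b) (hb2 : b ≤ 1) : ∃ T ∈ Set.Icc T₀ 1, φ T = b := by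
  have := intermediate_value_Icc hT₀.2 h.1.continuousOn (a := T₀) (b := 1)
  have hmem : b ∈ Set.Icc (φ T₀) (φ 1) := ⟨hb1, by rw [h.2.2.2]; exact hb2⟩
  obtain ⟨T, hT, hTb⟩ := this hmem
  exact ⟨T, hT, hTb⟩

lemma schedule_reparam (ρ χ : ℝ → ℝ) (T : ℝ) (hT0 : 0 ≤ T)
    (hρc : Continuous ρ) (hρm : Monotone ρ) (hρ0 : ρ 0 = 0)
    (hχ : IsReparam χ) (hle : ρ (χ T) ≤ 1) :
    IsReparam (fun t => ρ (χ (min (2*t) 1 * T)) + max (2*t-1) 0 * (1 - ρ (χ T))) := by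
  obtain ⟨hχc, hχm, hχ0, hχ1⟩ := hχ
  refine ⟨?_, ?_, ?_, ?_⟩
  · apply Continuous.add
    · exact hρc.comp (hχc.comp (((continuous_const.mul continuous_id).min
        continuous_const).mul continuous_const))
    · exact (((continuous_const.mul continuous_id).sub continuous_const).max
        continuous_const).mul continuous_const
  · intro s t hst
    apply add_le_add
    · exact hρm (hχm (mul_le_mul_of_nonneg_right (min_le_min (by linarith) le_rfl) hT0))
    · exact mul_le_mul_of_nonneg_right (max_le_max (by linarith) le_rfl) (by linarith)
  · norm_num [hχ0, hρ0]
  · norm_num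

lemma main_transfer (F G : ℝ → E) (φ ψ rinv minv r m : ℝ → ℝ) (T c : ℝ)
    (hφ : IsReparam φ) (hψ : IsReparam ψ) (hT : T ∈ Set.Icc (0:ℝ) 1)
    (hc : ∀ t ∈ Set.Icc (0:ℝ) 1, dist (F (φ t)) (G (ψ t)) ≤ c)
    (hrc : Continuous rinv) (hrm : Monotone rinv) (hr0 : rinv 0 = 0)
    (hmc : Continuous minv) (hmm : Monotone minv) (hm0 : minv 0 = 0)
    (hr1 : ∀ x, 0 ≤ x → x ≤ φ T → r (rinv x) = x)
    (hm1 : ∀ x, 0 ≤ x → x ≤ ψ T → m (minv x) = x)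
    (hr5 : rinv (φ T) ≤ 1) (hm6 : minv (ψ T) ≤ 1)
    (hr3 : ∀ p, rinv (φ T) ≤ p → p ≤ 1 → F (r p) = F (φ T))
    (hm4 : ∀ p, minv (ψ T) ≤ p → p ≤ 1 → G (m p) = G (ψ T)) :
    ∃ φ' ψ' : ℝ → ℝ, IsReparam φ' ∧ IsReparam ψ' ∧
      ∀ t ∈ Set.Icc (0:ℝ) 1, dist (F (r (φ' t))) (G (m (ψ' t))) ≤ c := by
  obtain ⟨hφc, hφm, hφ0, hφ1⟩ := hφ
  obtain ⟨hψc, hψm, hψ0, hψ1⟩ := hψ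
  set φ' : ℝ → ℝ := fun t => rinv (φ (min (2*t) 1 * T)) + max (2*t-1) 0 * (1 - rinv (φ T))
    with hφ'def
  set ψ' : ℝ → ℝ := fun t => minv (ψ (min (2*t) 1 * T)) + max (2*t-1) 0 * (1 - minv (ψ T))
    with hψ'def
  have hφ' : IsReparam φ' := schedule_reparam rinv φ T hT.1 hrc hrm hr0
    ⟨hφc, hφm, hφ0, hφ1⟩ hr5
  have hψ' : IsReparam ψ' := schedule_reparam minv ψ T hT.1 hmc hmm hm0
    ⟨hψc, hψm, hψ0, hψ1⟩ hm6
  refine ⟨φ', ψ', hφ', hψ', fun t ht => ?_⟩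
  obtain ⟨ht0, ht1⟩ := ht
  by_cases htc : t ≤ 1/2
  · have e1 : min (2*t) 1 = 2*t := min_eq_left (by linarith)
    have e2 : max (2*t-1) 0 = 0 := max_eq_right (by linarith)
    have hu0 : 0 ≤ 2*t*T := mul_nonneg (by linarith) hT.1
    have hu1 : 2*t*T ≤ T := by nlinarith [hT.1]
    have huI : 2*t*T ∈ Set.Icc (0:ℝ) 1 := ⟨hu0, hu1.trans hT.2⟩
    have hφu0 : 0 ≤ φ (2*t*T) := hφ0 ▸ hφm hu0
    have hφuT : φ (2*t*T) ≤ φ T := hφm hu1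
    have hψu0 : 0 ≤ ψ (2*t*T) := hψ0 ▸ hψm hu0
    have hψuT : ψ (2*t*T) ≤ ψ T := hψm hu1
    have eφ : φ' t = rinv (φ (2*t*T)) := by rw [hφ'def]; simp only; rw [e1, e2]; ring
    have eψ : ψ' t = minv (ψ (2*t*T)) := by rw [hψ'def]; simp only; rw [e1, e2]; ring
    rw [eφ, eψ, hr1 _ hφu0 hφuT, hm1 _ hψu0 hψuT]
    exact hc _ huI
  · push_neg at htc
    have e1 : min (2*t) 1 = 1 := min_eq_right (by linarith)
    have e2 : max (2*t-1) 0 = 2*t-1 := max_eq_left (by linarith)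
    have eφ : φ' t = rinv (φ T) + (2*t-1) * (1 - rinv (φ T)) := by
      rw [hφ'def]; simp only; rw [e1, e2, one_mul]
    have eψ : ψ' t = minv (ψ T) + (2*t-1) * (1 - minv (ψ T)) := by
      rw [hψ'def]; simp only; rw [e1, e2, one_mul]
    have hφ'lb : rinv (φ T) ≤ φ' t := by
      rw [eφ]; nlinarith
    have hφ'ub : φ' t ≤ 1 := by rw [eφ]; nlinarith
    have hψ'lb : minv (ψ T) ≤ ψ' t := by rw [eψ]; nlinarith
    have hψ'ub : ψ' t ≤ 1 := by rw [eψ]; nlinarith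
    rw [hr3 _ hφ'lb hφ'ub, hm4 _ hψ'lb hψ'ub]
    exact hc T hT

end Frechet

section Trans
variable {E : Type*} [NormedAddCommGroup E] [NormedSpace ℝ E]

lemma trans1 (nf ng : ℕ) (fv gv : ℕ → E) (φ ψ : ℝ → ℝ) (T c : ℝ)
    (hφ : IsReparam φ) (hψ : IsReparam ψ) (hT : T ∈ Set.Icc (0:ℝ) 1)
    (hc : ∀ t ∈ Set.Icc (0:ℝ) 1,
        dist (polyline (nf+1) fv (φ t)) (polyline (ng+1) gv (ψ t)) ≤ c)
    (hφT : φ T = (nf:ℝ)/((nf:ℝ)+1)) (hψT : (ng:ℝ)/((ng:ℝ)+1) ≤ ψ T) :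
    ∃ y' ∈ segment ℝ (gv ng) (gv (ng+1)), ∃ φ' ψ' : ℝ → ℝ, IsReparam φ' ∧ IsReparam ψ' ∧
      ∀ t ∈ Set.Icc (0:ℝ) 1,
        dist (polyline nf fv (φ' t)) (polyline (ng+1) (subVert gv ng y') (ψ' t)) ≤ c := by
  have hng1 : (0:ℝ) < (ng:ℝ)+1 := by positivity
  have hnf1 : (0:ℝ) < (nf:ℝ)+1 := by positivity
  set A : ℝ := (ng:ℝ)/((ng:ℝ)+1) with hA
  set B : ℝ := (nf:ℝ)/((nf:ℝ)+1) with hB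
  have hA0 : 0 ≤ A := by rw [hA]; positivity
  have hA1 : A ≤ 1 := by rw [hA, div_le_one hng1]; linarith
  have hB0 : 0 ≤ B := by rw [hB]; positivity
  have hB1 : B ≤ 1 := by rw [hB, div_le_one hnf1]; linarith
  have hψT1 : ψ T ≤ 1 := (reparam_mem hψ hT).2
  set lam : ℝ := ((ng:ℝ)+1) * ψ T - ng with hlam
  have hAeq : ((ng:ℝ)+1) * A = ng := by rw [hA]; field_simp
  have hlam0 : 0 ≤ lam := by
    rw [hlam]
    nlinarith [mul_le_mul_of_nonneg_left hψT (le_of_lt hng1)]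
  have hlam1 : lam ≤ 1 := by rw [hlam]; nlinarith
  have hsrel : ψ T = A + lam * (1 - A) := by
    rw [hlam, hA]; field_simp; ring
  have h1A : 0 ≤ 1 - A := by linarith
  set y' : E := (1 - lam) • gv ng + lam • gv (ng+1) with hy'
  have hy'seg : y' ∈ segment ℝ (gv ng) (gv (ng+1)) :=
    ⟨1 - lam, lam, by linarith, hlam0, by ring, rfl⟩
  -- the r-side inverse identity
  have hrB : ∀ x : ℝ, 0 ≤ x → x ≤ B → (x * (((nf:ℝ)+1)/nf)) * B = x := by
    intro x hx0 hx1
    rcases Nat.eq_zero_or_pos nf with h | h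
    · have hB' : B = 0 := by rw [hB, h]; norm_num
      have : x = 0 := le_antisymm (hB' ▸ hx1) hx0
      rw [this, hB']; ring
    · have hnf0 : (0:ℝ) < nf := by exact_mod_cast h
      rw [hB]; field_simp
  have hrinvB : nf ≠ 0 → B * (((nf:ℝ)+1)/nf) = 1 := by
    intro h
    have hnf0 : (0:ℝ) < nf := by exact_mod_cast Nat.pos_of_ne_zero h
    rw [hB]; field_simp
  have hminv_mem : ∀ s : ℝ, 0 ≤ s → s ≤ 1 →
      0 ≤ min s A + lam * max (s - A) 0 ∧ min s A + lam * max (s - A) 0 ≤ 1 := by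
    intro s h0 h1
    constructor
    · have h2 : 0 ≤ min s A := le_min h0 hA0
      have h3 : 0 ≤ max (s - A) 0 := le_max_right _ _
      nlinarith
    · have h2 : min s A ≤ A := min_le_right _ _
      have h3 : max (s - A) 0 ≤ 1 - A := max_le (by linarith) h1A
      nlinarith
  obtain ⟨φ', ψ', hφ', hψ', hd⟩ := main_transfer (polyline (nf+1) fv) (polyline (ng+1) gv)
    φ ψ (fun x => x * (((nf:ℝ)+1)/nf)) (fun s => min s A + max (s - A) 0 / lam)
    (fun s => s * B) (fun p => min p A + lam * max (p - A) 0) T c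
    ⟨hφ.1, hφ.2.1, hφ.2.2.1, hφ.2.2.2⟩ hψ hT hc
    (continuous_mul_right _)
    (fun a b hab => mul_le_mul_of_nonneg_right hab (by positivity))
    (by simp)
    ((continuous_id.min continuous_const).add
      (((continuous_id.sub continuous_const).max continuous_const).div_const _))
    (by
      intro a b hab
      apply add_le_add (min_le_min hab le_rfl)
      rw [div_eq_mul_inv, div_eq_mul_inv]
      exact mul_le_mul_of_nonneg_right (max_le_max (by linarith) le_rfl)
        (inv_nonneg.2 hlam0))
    (by
      rw [min_eq_left hA0, max_eq_right (by linarith : (0:ℝ) - A ≤ 0), zero_div, add_zero])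
    (by
      intro x hx0 hx1
      rw [hφT] at hx1
      exact hrB x hx0 hx1)
    (by
      -- m (minv x) = x for 0 ≤ x ≤ ψ T
      intro x hx0 hx1
      rcases le_or_gt x A with hxA | hxA
      · rw [max_eq_right (by linarith : x - A ≤ 0), zero_div, add_zero,
          min_eq_left hxA, min_eq_left hxA, max_eq_right (by linarith : x - A ≤ 0),
          mul_zero, add_zero]
      · have hlampos : 0 < lam := by
          rcases eq_or_lt_of_le hlam0 with h | h
          · exfalso; rw [← h] at hsrel; simp at hsrel; rw [hsrel] at hx1; linarith
          · exact h
        rw [min_eq_right (le_of_lt hxA), max_eq_left (by linarith : 0 ≤ x - A)]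
        have hq : 0 ≤ (x - A) / lam := div_nonneg (by linarith) hlam0
        rw [min_eq_right (by linarith : A ≤ A + (x - A)/lam),
          max_eq_left (by linarith : 0 ≤ A + (x - A)/lam - A)]
        have : A + (x - A) / lam - A = (x - A) / lam := by ring
        rw [this, mul_div_cancel₀ _ (ne_of_gt hlampos)]
        ring)
    (by
      -- rinv (φ T) ≤ 1
      rw [hφT]
      rcases Nat.eq_zero_or_pos nf with h | h
      · rw [hB, h]; norm_num
      · rw [hrinvB (by omega)])
    (by
      -- minv (ψ T) ≤ 1
      rcases eq_or_lt_of_le hlam0 with h | h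
      · have : ψ T = A := by rw [hsrel, ← h]; ring
        rw [this, min_eq_left le_rfl, max_eq_right (by linarith : A - A ≤ 0), zero_div,
          add_zero]
        exact hA1
      · rw [min_eq_right (by linarith [hsrel, mul_nonneg (le_of_lt h) h1A] : A ≤ ψ T),
          max_eq_left (by linarith [hsrel, mul_nonneg (le_of_lt h) h1A] : 0 ≤ ψ T - A)]
        rw [hsrel]
        have e : A + lam * (1 - A) - A = lam * (1 - A) := by ring
        rw [e, mul_comm, mul_div_assoc, div_self (ne_of_gt h), mul_one]
        linarith)
    (by
      -- F (r p) = F (φ T)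
      intro p hp1 hp2
      apply congrArg
      rw [hφT]
      rcases Nat.eq_zero_or_pos nf with h | h
      · rw [hB, h]; norm_num
      · rw [hφT, hrinvB (by omega)] at hp1
        have : p = 1 := le_antisymm hp2 hp1
        rw [this, one_mul])
    (by
      -- G (m p) = G (ψ T)
      intro p hp1 hp2
      apply congrArg
      rcases eq_or_lt_of_le hlam0 with h | h
      · have hψTA : ψ T = A := by rw [hsrel, ← h]; ring
        rw [hψTA, min_eq_left le_rfl, max_eq_right (by linarith : A - A ≤ 0), zero_div,
          add_zero] at hp1
        rw [min_eq_right hp1, ← h]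
        rw [hψTA]; ring
      · have hminv1 : min (ψ T) A + max (ψ T - A) 0 / lam = 1 := by
          rw [min_eq_right (by nlinarith [hsrel] : A ≤ ψ T),
            max_eq_left (by nlinarith [hsrel] : 0 ≤ ψ T - A), hsrel]
          have e : A + lam * (1 - A) - A = lam * (1 - A) := by ring
          rw [e, mul_comm, mul_div_assoc, div_self (ne_of_gt h)]
          ring
        rw [hminv1] at hp1
        have hp : p = 1 := le_antisymm hp2 hp1
        rw [hp, min_eq_right hA1, max_eq_left (by linarith : 0 ≤ 1 - A), hsrel])
  refine ⟨y', hy'seg, φ', ψ', hφ', hψ', fun t ht => ?_⟩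
  have hmφ := reparam_mem hφ' ht
  have hmψ := reparam_mem hψ' ht
  have hd' := hd t ht
  have e1 : polyline (nf+1) fv (φ' t * B) = polyline nf fv (φ' t) :=
    (poly_prefix nf fv (φ' t) hmφ.1 hmφ.2).symm
  have e2 : polyline (ng+1) (subVert gv ng y') (ψ' t)
      = polyline (ng+1) (subVert gv ng (gv (ng+1)))
          (min (ψ' t) A + lam * max (ψ' t - A) 0) :=
    poly_edge ng gv (gv (ng+1)) y' lam hlam0 hlam1 hy' (ψ' t) hmψ.1 hmψ.2
  have hagree : ∀ k, k ≤ ng+1 → subVert gv ng (gv (ng+1)) k = gv k := by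
    intro k hk
    unfold subVert
    by_cases h : k ≤ ng
    · simp [h]
    · have : k = ng + 1 := by omega
      simp [h, this]
  obtain ⟨hmm0, hmm1⟩ := hminv_mem (ψ' t) hmψ.1 hmψ.2
  have e3 : polyline (ng+1) (subVert gv ng (gv (ng+1)))
        (min (ψ' t) A + lam * max (ψ' t - A) 0)
      = polyline (ng+1) gv (min (ψ' t) A + lam * max (ψ' t - A) 0) :=
    poly_congr (ng+1) _ _ hagree _ hmm0 hmm1
  rw [← e1, e2, e3]
  exact hd'

end Trans

section Lip
variable {E : Type*} [NormedAddCommGroup E] [NormedSpace ℝ E]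

lemma frechet_le_right (nf : ℕ) (fv : ℕ → E) (n : ℕ) (w : ℕ → E) (y y' : E) :
    frechetDist (polyline nf fv) (polyline (n+1) (subVert w n y))
      ≤ frechetDist (polyline nf fv) (polyline (n+1) (subVert w n y')) + dist y y' := by
  have hne := frechetSet_nonempty nf (n+1) fv (subVert w n y')
  have key : ∀ c ∈ frechetSet (polyline nf fv) (polyline (n+1) (subVert w n y')),
      frechetDist (polyline nf fv) (polyline (n+1) (subVert w n y)) ≤ c + dist y y' := by
    intro c hc
    obtain ⟨hc0, φ, ψ, hφ, hψ, hb⟩ := hc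
    apply frechetDist_le
    refine ⟨add_nonneg hc0 dist_nonneg, φ, ψ, hφ, hψ, fun t ht => ?_⟩
    have hm := reparam_mem hψ ht
    calc dist (polyline nf fv (φ t)) (polyline (n+1) (subVert w n y) (ψ t))
        ≤ dist (polyline nf fv (φ t)) (polyline (n+1) (subVert w n y') (ψ t))
          + dist (polyline (n+1) (subVert w n y') (ψ t)) (polyline (n+1) (subVert w n y) (ψ t)) :=
          dist_triangle _ _ _
      _ ≤ c + dist y y' := add_le_add (hb t ht)
          (by rw [dist_comm y y']; exact subvert_dist n w y' y (ψ t) hm.1 hm.2)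
  have hlb : frechetDist (polyline nf fv) (polyline (n+1) (subVert w n y)) - dist y y'
      ≤ sInf (frechetSet (polyline nf fv) (polyline (n+1) (subVert w n y'))) :=
    le_csInf hne fun c hc => by linarith [key c hc]
  rw [frechetDist_eq (polyline nf fv) (polyline (n+1) (subVert w n y'))]
  linarith

lemma frechet_le_left (n : ℕ) (v : ℕ → E) (ng : ℕ) (gv : ℕ → E) (x x' : E) :
    frechetDist (polyline (n+1) (subVert v n x)) (polyline ng gv)
      ≤ frechetDist (polyline (n+1) (subVert v n x')) (polyline ng gv) + dist x x' := by
  have hne := frechetSet_nonempty (n+1) ng (subVert v n x') gv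
  have key : ∀ c ∈ frechetSet (polyline (n+1) (subVert v n x')) (polyline ng gv),
      frechetDist (polyline (n+1) (subVert v n x)) (polyline ng gv) ≤ c + dist x x' := by
    intro c hc
    obtain ⟨hc0, φ, ψ, hφ, hψ, hb⟩ := hc
    apply frechetDist_le
    refine ⟨add_nonneg hc0 dist_nonneg, φ, ψ, hφ, hψ, fun t ht => ?_⟩
    have hm := reparam_mem hφ ht
    calc dist (polyline (n+1) (subVert v n x) (φ t)) (polyline ng gv (ψ t))
        ≤ dist (polyline (n+1) (subVert v n x) (φ t)) (polyline (n+1) (subVert v n x') (φ t))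
          + dist (polyline (n+1) (subVert v n x') (φ t)) (polyline ng gv (ψ t)) :=
          dist_triangle _ _ _
      _ ≤ dist x x' + c := add_le_add (subvert_dist n v x x' (φ t) hm.1 hm.2) (hb t ht)
      _ = c + dist x x' := by ring
  have hlb : frechetDist (polyline (n+1) (subVert v n x)) (polyline ng gv) - dist x x'
      ≤ sInf (frechetSet (polyline (n+1) (subVert v n x')) (polyline ng gv)) :=
    le_csInf hne fun c hc => by linarith [key c hc]
  rw [frechetDist_eq (polyline (n+1) (subVert v n x')) (polyline ng gv)]
  linarith

lemma cont_right (nf : ℕ) (fv : ℕ → E) (n : ℕ) (w : ℕ → E) :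
    Continuous fun y : E => frechetDist (polyline nf fv) (polyline (n+1) (subVert w n y)) := by
  apply LipschitzWith.continuous (K := 1)
  apply LipschitzWith.of_dist_le_mul
  intro y y'
  rw [Real.dist_eq, NNReal.coe_one, one_mul, abs_sub_le_iff]
  constructor
  · linarith [frechet_le_right nf fv n w y y']
  · rw [dist_comm y y']
    linarith [frechet_le_right nf fv n w y' y]

lemma cont_left (n : ℕ) (v : ℕ → E) (ng : ℕ) (gv : ℕ → E) :
    Continuous fun x : E => frechetDist (polyline (n+1) (subVert v n x)) (polyline ng gv) := by
  apply LipschitzWith.continuous (K := 1)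
  apply LipschitzWith.of_dist_le_mul
  intro x x'
  rw [Real.dist_eq, NNReal.coe_one, one_mul, abs_sub_le_iff]
  constructor
  · linarith [frechet_le_left n v ng gv x x']
  · rw [dist_comm x x']
    linarith [frechet_le_left n v ng gv x' x]

lemma exists_gap (δ : ℝ) (a b : E) (h : E → ℝ) (hcont : Continuous h)
    (hgt : ∀ z ∈ segment ℝ a b, ¬ h z ≤ δ) :
    ∃ ε > 0, ∀ z ∈ segment ℝ a b, δ + ε ≤ h z := by
  have hcomp : IsCompact (segment ℝ a b) := by
    rw [segment_eq_image]
    apply isCompact_Icc.image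
    exact ((continuous_const.sub continuous_id).smul continuous_const).add
      (continuous_id.smul continuous_const)
  obtain ⟨z₀, hz₀, hmin⟩ := hcomp.exists_isMinOn ⟨a, left_mem_segment ℝ a b⟩
    hcont.continuousOn
  refine ⟨h z₀ - δ, by linarith [lt_of_not_ge (hgt z₀ hz₀)], fun z hz => ?_⟩
  have h2 : h z₀ ≤ h z := hmin hz
  linarith

end Lip


/-- if the reachability intervals `R_i[j]` (on edge `w j w(j+1)`) and
`R'_j[i]` (on edge `v i v(i+1)`) are both empty, then `R_{i+1}[j]` and `R'_{j+1}[i]`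
are both empty. -/
theorem empty_reach_propagates {d : ℕ} (v w : ℕ → EuclideanSpace ℝ (Fin d))
    (i j : ℕ) (δ : ℝ)
    (hR : ∀ y ∈ segment ℝ (w j) (w (j+1)),
        ¬ frechetDist (polyline i v) (polyline (j+1) (subVert w j y)) ≤ δ)
    (hR' : ∀ x ∈ segment ℝ (v i) (v (i+1)),
        ¬ frechetDist (polyline (i+1) (subVert v i x)) (polyline j w) ≤ δ) :
    (∀ y ∈ segment ℝ (w j) (w (j+1)),
        ¬ frechetDist (polyline (i+1) v) (polyline (j+1) (subVert w j y)) ≤ δ) ∧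
    (∀ x ∈ segment ℝ (v i) (v (i+1)),
        ¬ frechetDist (polyline (i+1) (subVert v i x)) (polyline (j+1) w) ≤ δ) := by
  have hB0 : (0:ℝ) ≤ (i:ℝ)/((i:ℝ)+1) := by positivity
  have hB1 : (i:ℝ)/((i:ℝ)+1) ≤ 1 := by rw [div_le_one (by positivity)]; linarith
  have hA0 : (0:ℝ) ≤ (j:ℝ)/((j:ℝ)+1) := by positivity
  have hA1 : (j:ℝ)/((j:ℝ)+1) ≤ 1 := by rw [div_le_one (by positivity)]; linarith
  obtain ⟨ε1, hε1, hgap1⟩ := exists_gap δ (w j) (w (j+1))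
    (fun z => frechetDist (polyline i v) (polyline (j+1) (subVert w j z)))
    (cont_right i v j w) hR
  obtain ⟨ε2, hε2, hgap2⟩ := exists_gap δ (v i) (v (i+1))
    (fun z => frechetDist (polyline (i+1) (subVert v i z)) (polyline j w))
    (cont_left i v j w) hR'
  have hε : 0 < min ε1 ε2 := lt_min hε1 hε2
  constructor
  · intro y hy hle
    obtain ⟨c, hcS, hclt⟩ := exists_matching_lt _ _ δ (min ε1 ε2)
      (frechetSet_nonempty (i+1) (j+1) v (subVert w j y)) hle hε
    obtain ⟨hc0, φ, ψ, hφ, hψ, hmatch⟩ := hcS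
    obtain ⟨T, hTm, hφT⟩ := reparam_ivt hφ 0 ⟨le_rfl, zero_le_one⟩ ((i:ℝ)/((i:ℝ)+1))
      (by rw [hφ.2.2.1]; exact hB0) hB1
    rcases le_or_gt ((j:ℝ)/((j:ℝ)+1)) (ψ T) with hcase | hcase
    · obtain ⟨y', hy'seg, φ', ψ', hφ', hψ', hd⟩ :=
        trans1 i j v (subVert w j y) φ ψ T c hφ hψ hTm hmatch hφT hcase
      have e1 : subVert w j y j = w j := by unfold subVert; simp
      have e2 : subVert w j y (j+1) = y := by unfold subVert; simp
      rw [e1, e2] at hy'seg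
      have hy'' : y' ∈ segment ℝ (w j) (w (j+1)) :=
        (convex_segment (w j) (w (j+1))).segment_subset (left_mem_segment ℝ _ _) hy hy'seg
      rw [subVert_subVert] at hd
      have hfd : frechetDist (polyline i v) (polyline (j+1) (subVert w j y')) ≤ c :=
        frechetDist_le _ _ c ⟨hc0, φ', ψ', hφ', hψ', hd⟩
      have hg := hgap1 y' hy''
      linarith [min_le_left ε1 ε2]
    · obtain ⟨T', hT'm, hψT'⟩ := reparam_ivt hψ T hTm ((j:ℝ)/((j:ℝ)+1))
        (le_of_lt hcase) hA1
      have hT'mem : T' ∈ Set.Icc (0:ℝ) 1 := ⟨hTm.1.trans hT'm.1, hT'm.2⟩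
      have hφT' : (i:ℝ)/((i:ℝ)+1) ≤ φ T' := by rw [← hφT]; exact hφ.2.1 hT'm.1
      obtain ⟨x₀, hx₀seg, φ', ψ', hφ', hψ', hd⟩ :=
        trans1 j i (subVert w j y) v ψ φ T' c hψ hφ hT'mem
          (fun t ht => by rw [dist_comm]; exact hmatch t ht) hψT' hφT'
      have hagree : ∀ k, k ≤ j → subVert w j y k = w k := fun k hk => by
        unfold subVert; simp [hk]
      have hfd : frechetDist (polyline (i+1) (subVert v i x₀)) (polyline j w) ≤ c := by
        apply frechetDist_le
        refine ⟨hc0, ψ', φ', hψ', hφ', fun t ht => ?_⟩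
        rw [dist_comm]
        have hm := reparam_mem hφ' ht
        rw [← poly_congr j (subVert w j y) w hagree (φ' t) hm.1 hm.2]
        exact hd t ht
      have hg := hgap2 x₀ hx₀seg
      linarith [min_le_right ε1 ε2]
  · intro x hx hle
    obtain ⟨c, hcS, hclt⟩ := exists_matching_lt _ _ δ (min ε1 ε2)
      (frechetSet_nonempty (i+1) (j+1) (subVert v i x) w) hle hε
    obtain ⟨hc0, φ, ψ, hφ, hψ, hmatch⟩ := hcS
    obtain ⟨T, hTm, hψT⟩ := reparam_ivt hψ 0 ⟨le_rfl, zero_le_one⟩ ((j:ℝ)/((j:ℝ)+1))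
      (by rw [hψ.2.2.1]; exact hA0) hA1
    rcases le_or_gt ((i:ℝ)/((i:ℝ)+1)) (φ T) with hcase | hcase
    · obtain ⟨x', hx'seg, φ', ψ', hφ', hψ', hd⟩ :=
        trans1 j i w (subVert v i x) ψ φ T c hψ hφ hTm
          (fun t ht => by rw [dist_comm]; exact hmatch t ht) hψT hcase
      have e1 : subVert v i x i = v i := by unfold subVert; simp
      have e2 : subVert v i x (i+1) = x := by unfold subVert; simp
      rw [e1, e2] at hx'seg
      have hx'' : x' ∈ segment ℝ (v i) (v (i+1)) :=
        (convex_segment (v i) (v (i+1))).segment_subset (left_mem_segment ℝ _ _) hx hx'seg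
      rw [subVert_subVert] at hd
      have hfd : frechetDist (polyline (i+1) (subVert v i x')) (polyline j w) ≤ c := by
        apply frechetDist_le
        refine ⟨hc0, ψ', φ', hψ', hφ', fun t ht => ?_⟩
        rw [dist_comm]
        exact hd t ht
      have hg := hgap2 x' hx''
      linarith [min_le_right ε1 ε2]
    · obtain ⟨T'', hT''m, hφT''⟩ := reparam_ivt hφ T hTm ((i:ℝ)/((i:ℝ)+1))
        (le_of_lt hcase) hB1
      have hT''mem : T'' ∈ Set.Icc (0:ℝ) 1 := ⟨hTm.1.trans hT''m.1, hT''m.2⟩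
      have hψT'' : (j:ℝ)/((j:ℝ)+1) ≤ ψ T'' := by rw [← hψT]; exact hψ.2.1 hT''m.1
      obtain ⟨y', hy'seg, φ', ψ', hφ', hψ', hd⟩ :=
        trans1 i j (subVert v i x) w φ ψ T'' c hφ hψ hT''mem hmatch hφT'' hψT''
      have hagree : ∀ k, k ≤ i → subVert v i x k = v k := fun k hk => by
        unfold subVert; simp [hk]
      have hfd : frechetDist (polyline i v) (polyline (j+1) (subVert w j y')) ≤ c := by
        apply frechetDist_le
        refine ⟨hc0, φ', ψ', hφ', hψ', fun t ht => ?_⟩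
        have hm := reparam_mem hφ' ht
        rw [← poly_congr i (subVert v i x) v hagree (φ' t) hm.1 hm.2]
        exact hd t ht
      have hg := hgap1 y' hy'seg
      linarith [min_le_left ε1 ε2]
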